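/- Let (X,d) be a compact metric space and f_{0,∞} = {f_n}_{n=0}^∞ a sequence of continuous surjective self-maps of X. If (X, f_{0,∞}) is not topologically mixing, then the induced system (𝓜(X), f̂_{0,∞}) does not have the shadowing property. -/

import Mathlib

open MeasureTheory Filter

/-- `nacomp f n = f_{n-1} ∘ ⋯ ∘ f_0` (with `nacomp f 0 = id`): the time-`n` map of the
non-autonomous system `(X, f_{0,∞})`. -/
def nacomp {Y : Type*} (f : ℕ → Y → Y) : ℕ → Y → Y
  | 0 => id
  | n + 1 => f n ∘ nacomp f n

/-- The induced pushforward map `f̂` on the space `𝓜(X)` of Borel probability measures,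
equipped with the Lévy–Prokhorov metric. -/
noncomputable def inducedMap {X : Type*} [MetricSpace X] [MeasurableSpace X] [BorelSpace X]
    (f : X → X) (hf : Continuous f) :
    LevyProkhorov (ProbabilityMeasure X) → LevyProkhorov (ProbabilityMeasure X) :=
  fun μ => (LevyProkhorov.toMeasureEquiv (α := ProbabilityMeasure X)).symm
    (((LevyProkhorov.toMeasureEquiv (α := ProbabilityMeasure X)) μ).map hf.measurable.aemeasurable)

/-- Topological mixing of the non-autonomous system given by the maps `f n`. -/
def NAMixing {Y : Type*} [TopologicalSpace Y] (f : ℕ → Y → Y) : Prop :=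
  ∀ U V : Set Y, IsOpen U → IsOpen V → U.Nonempty → V.Nonempty →
    ∃ N, 1 ≤ N ∧ ∀ n, N ≤ n → (nacomp f n '' U ∩ V).Nonempty

/-- The shadowing property of the non-autonomous system given by the maps `f n`. -/
def NAShadowing {Y : Type*} [PseudoMetricSpace Y] (f : ℕ → Y → Y) : Prop :=
  ∀ ε : ℝ, 0 < ε → ∃ δ : ℝ, 0 < δ ∧ ∀ x : ℕ → Y,
    (∀ n, dist (f n (x n)) (x (n + 1)) < δ) →
    ∃ z : Y, ∀ n, dist (nacomp f n z) (x n) < ε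

section AuxLemmas

open Metric Set ENNReal NNReal

variable {X : Type*} [MetricSpace X] [MeasurableSpace X] [BorelSpace X]

omit [MetricSpace X] [BorelSpace X] in
lemma mix_isProb (t : ℝ≥0) (ht : t ≤ 1) (μ ν : Measure X)
    [IsProbabilityMeasure μ] [IsProbabilityMeasure ν] :
    IsProbabilityMeasure ((1 - t) • μ + t • ν) := by
  constructor
  simp only [Measure.add_apply, Measure.smul_apply, smul_eq_mul, measure_univ, mul_one,
    ENNReal.smul_def]
  rw [← ENNReal.coe_add, tsub_add_cancel_of_le ht, ENNReal.coe_one]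

omit [BorelSpace X] in
lemma mix_edist_le {s t : ℝ≥0} (hst : s ≤ t) (ht : t ≤ 1) (μ ν : Measure X)
    [IsProbabilityMeasure μ] [IsProbabilityMeasure ν] :
    levyProkhorovEDist ((1 - s) • μ + s • ν) ((1 - t) • μ + t • ν)
      ≤ ((t - s : ℝ≥0) : ℝ≥0∞) := by
  rcases eq_or_lt_of_le hst with rfl | hlt
  · simp [levyProkhorovEDist_self]
  have hts : (0:ℝ≥0) < t - s := tsub_pos_of_lt hlt
  apply levyProkhorovEDist_le_of_forall
  intro e B he hetop hB
  have hepos : (0:ℝ≥0∞) < e := lt_of_le_of_lt zero_le he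
  have hsub : B ⊆ thickening e.toReal B :=
    self_subset_thickening (ENNReal.toReal_pos hepos.ne' hetop.ne) B
  have hμB : μ B ≤ 1 := prob_le_one
  have hνB : ν B ≤ 1 := prob_le_one
  have h1s : ((1 - s : ℝ≥0) : ℝ≥0∞) = ((1 - t : ℝ≥0) : ℝ≥0∞) + ((t - s : ℝ≥0) : ℝ≥0∞) := by
    rw [← ENNReal.coe_add, tsub_add_tsub_cancel ht hst]
  have htdec : ((t : ℝ≥0) : ℝ≥0∞) = (s : ℝ≥0∞) + ((t - s : ℝ≥0) : ℝ≥0∞) := by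
    rw [← ENNReal.coe_add, add_tsub_cancel_of_le hst]
  have key1 : ((1 - s) • μ + s • ν) B ≤ ((1 - t) • μ + t • ν) B + e := by
    simp only [Measure.add_apply, Measure.smul_apply, smul_eq_mul, ENNReal.smul_def]
    calc ((1 - s : ℝ≥0) : ℝ≥0∞) * μ B + (s : ℝ≥0∞) * ν B
        = ((1 - t : ℝ≥0) : ℝ≥0∞) * μ B + ((t - s : ℝ≥0) : ℝ≥0∞) * μ B + (s : ℝ≥0∞) * ν B := by
          rw [h1s, add_mul]
      _ ≤ ((1 - t : ℝ≥0) : ℝ≥0∞) * μ B + ((t - s : ℝ≥0) : ℝ≥0∞) * 1 + (t : ℝ≥0∞) * ν B := by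
          gcongr
      _ = ((1 - t : ℝ≥0) : ℝ≥0∞) * μ B + (t : ℝ≥0∞) * ν B + ((t - s : ℝ≥0) : ℝ≥0∞) := by
          rw [mul_one]; ring
      _ ≤ ((1 - t : ℝ≥0) : ℝ≥0∞) * μ B + (t : ℝ≥0∞) * ν B + e := by gcongr
  have key2 : ((1 - t) • μ + t • ν) B ≤ ((1 - s) • μ + s • ν) B + e := by
    simp only [Measure.add_apply, Measure.smul_apply, smul_eq_mul, ENNReal.smul_def]
    calc ((1 - t : ℝ≥0) : ℝ≥0∞) * μ B + (t : ℝ≥0∞) * ν B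
        = ((1 - t : ℝ≥0) : ℝ≥0∞) * μ B
            + ((s : ℝ≥0∞) * ν B + ((t - s : ℝ≥0) : ℝ≥0∞) * ν B) := by
          rw [htdec, add_mul]
      _ ≤ ((1 - s : ℝ≥0) : ℝ≥0∞) * μ B
            + ((s : ℝ≥0∞) * ν B + ((t - s : ℝ≥0) : ℝ≥0∞) * 1) := by
          gcongr
      _ = ((1 - s : ℝ≥0) : ℝ≥0∞) * μ B + (s : ℝ≥0∞) * ν B + ((t - s : ℝ≥0) : ℝ≥0∞) := by
          rw [mul_one]; ring
      _ ≤ ((1 - s : ℝ≥0) : ℝ≥0∞) * μ B + (s : ℝ≥0∞) * ν B + e := by gcongr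
  exact ⟨key1.trans (by gcongr), key2.trans (by gcongr)⟩

lemma close_to_dirac {x : X} {ν : Measure X} {ε : ℝ} (hε : 0 < ε)
    (h : levyProkhorovEDist (Measure.dirac x) ν < ENNReal.ofReal ε) :
    1 ≤ ν (Metric.ball x ε) + ENNReal.ofReal ε := by
  have key := left_measure_le_of_levyProkhorovEDist_lt h (B := {x}) (MeasurableSet.singleton x)
  rw [ENNReal.toReal_ofReal hε.le, Metric.thickening_singleton] at key
  simpa [Measure.dirac_apply_of_mem (Set.mem_singleton x)] using key

lemma exists_chain {Y : Type*} (f : ℕ → Y → Y) (hsurj : ∀ n, Function.Surjective (f n)) :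
    ∀ (n : ℕ) (y : Y), ∃ p : ℕ → Y, p n = y ∧ ∀ k, f k (p k) = p (k + 1) := by
  intro n
  induction n with
  | zero =>
    intro y
    exact ⟨fun k => Nat.rec y (fun j a => f j a) k, rfl, fun k => rfl⟩
  | succ n ih =>
    intro y
    obtain ⟨y', hy'⟩ := hsurj n y
    obtain ⟨p, hpn, hp⟩ := ih y'
    exact ⟨p, by rw [← hp n, hpn, hy'], hp⟩

lemma nacomp_cont (f : ℕ → X → X) (hf : ∀ n, Continuous (f n)) (k : ℕ) :
    Continuous (nacomp f k) := by
  induction k with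
  | zero => exact continuous_id
  | succ k ih => exact (hf k).comp ih

lemma nacomp_induced (f : ℕ → X → X) (hf : ∀ n, Continuous (f n))
    (z : LevyProkhorov (ProbabilityMeasure X)) (k : ℕ) :
    ((LevyProkhorov.toMeasureEquiv (α := ProbabilityMeasure X)
        (nacomp (fun n => inducedMap (f n) (hf n)) k z)) : Measure X)
      = Measure.map (nacomp f k) (LevyProkhorov.toMeasureEquiv (α := ProbabilityMeasure X) z) := by
  induction k with
  | zero =>
    show ((LevyProkhorov.toMeasureEquiv (α := ProbabilityMeasure X) z) : Measure X) = _
    rw [show nacomp f 0 = id from rfl, Measure.map_id]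
  | succ k ih =>
    show ((LevyProkhorov.toMeasureEquiv (α := ProbabilityMeasure X)
        (inducedMap (f k) (hf k)
          (nacomp (fun n => inducedMap (f n) (hf n)) k z))) : Measure X) = _
    rw [inducedMap]
    simp only [Equiv.apply_symm_apply]
    rw [ProbabilityMeasure.toMeasure_map, ih,
      Measure.map_map (hf k).measurable (nacomp_cont f hf k).measurable]
    rfl

end AuxLemmas

open Metric Set ENNReal NNReal

/-- If all `f_n` are surjective and `(X, f_{0,∞})` is not topologically mixing, then the induced
system `(𝓜(X), f̂_{0,∞})` does not have the shadowing property. -/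
theorem induced_not_shadowing_of_not_mixing
    {X : Type*} [MetricSpace X] [CompactSpace X] [MeasurableSpace X] [BorelSpace X]
    (f : ℕ → X → X) (hf : ∀ n, Continuous (f n)) (hsurj : ∀ n, Function.Surjective (f n))
    (hnm : ¬ NAMixing f) :
    ¬ NAShadowing (fun n => inducedMap (f n) (hf n)) := by
  intro hS
  apply hnm
  intro U V hUo hVo hUne hVne
  obtain ⟨x, hxU⟩ := hUne
  obtain ⟨y, hyV⟩ := hVne
  obtain ⟨εU, hεU, hbU⟩ := Metric.isOpen_iff.mp hUo x hxU
  obtain ⟨εV, hεV, hbV⟩ := Metric.isOpen_iff.mp hVo y hyV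
  set ε : ℝ := min (min εU εV) 1 / 3 with hεdef
  have hminU : min (min εU εV) 1 ≤ εU := le_trans (min_le_left _ _) (min_le_left _ _)
  have hminV : min (min εU εV) 1 ≤ εV := le_trans (min_le_left _ _) (min_le_right _ _)
  have hmin1 : min (min εU εV) 1 ≤ 1 := min_le_right _ _
  have hminpos : 0 < min (min εU εV) 1 := lt_min (lt_min hεU hεV) one_pos
  have hεpos : 0 < ε := by rw [hεdef]; linarith
  have hεltU : ε < εU := by rw [hεdef]; linarith
  have hεltV : ε < εV := by rw [hεdef]; linarith
  have hε2 : ε + ε < 1 := by rw [hεdef]; linarith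
  obtain ⟨δ, hδ, hshad⟩ := hS ε hεpos
  obtain ⟨n₀, hn₀⟩ := exists_nat_one_div_lt hδ
  refine ⟨n₀ + 1, by omega, ?_⟩
  intro n hn
  have hnpos : 0 < n := by omega
  have hn0 : (n : ℝ≥0) ≠ 0 := Nat.cast_ne_zero.mpr hnpos.ne'
  obtain ⟨p, hpn, hp⟩ := exists_chain f hsurj n y
  -- the interpolation parameters
  set t : ℕ → ℝ≥0 := fun k => min ((k : ℝ≥0) / (n : ℝ≥0)) 1 with htdef
  have ht1 : ∀ k, t k ≤ 1 := fun k => min_le_right _ _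
  have htmono : ∀ k, t k ≤ t (k + 1) := by
    intro k
    apply min_le_min _ le_rfl
    gcongr
    exact_mod_cast Nat.le_succ k
  have htstep : ∀ k, t (k + 1) ≤ t k + 1 / (n : ℝ≥0) := by
    intro k
    have hcast : (((k+1) : ℕ) : ℝ≥0) / (n : ℝ≥0) = (k : ℝ≥0) / n + 1 / n := by
      push_cast
      rw [add_div]
    calc t (k+1) = min ((k : ℝ≥0) / n + 1 / n) 1 := by rw [htdef]; simp only; rw [hcast]
      _ ≤ min ((k : ℝ≥0) / n + 1 / n) (1 + 1 / n) := min_le_min le_rfl (le_add_right le_rfl)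
      _ = min ((k : ℝ≥0) / n) 1 + 1 / n := min_add_add_right _ _ _
      _ = t k + 1 / n := rfl
  have ht0 : t 0 = 0 := by simp [htdef]
  have htn : t n = 1 := by simp [htdef, div_self hn0]
  -- the pseudo-orbit
  set xm : ℕ → Measure X :=
    fun k => (1 - t k) • Measure.dirac (nacomp f k x) + t k • Measure.dirac (p k) with hxmdef
  have hxmp : ∀ k, IsProbabilityMeasure (xm k) := fun k => mix_isProb (t k) (ht1 k) _ _
  set xseq : ℕ → LevyProkhorov (ProbabilityMeasure X) :=
    fun k => (LevyProkhorov.toMeasureEquiv (α := ProbabilityMeasure X)).symm ⟨xm k, hxmp k⟩ with hxseqdef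
  have hxseqm : ∀ k, ((LevyProkhorov.toMeasureEquiv (α := ProbabilityMeasure X) (xseq k)) : Measure X) = xm k :=
    fun k => rfl
  -- it is a δ-pseudo-orbit
  have horb : ∀ k, dist (inducedMap (f k) (hf k) (xseq k)) (xseq (k + 1)) < δ := by
    intro k
    have hFm : ((LevyProkhorov.toMeasureEquiv (α := ProbabilityMeasure X)
          (inducedMap (f k) (hf k) (xseq k))) : Measure X)
        = (1 - t k) • Measure.dirac (nacomp f (k+1) x) + t k • Measure.dirac (p (k+1)) := by
      rw [inducedMap]
      simp only [Equiv.apply_symm_apply]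
      rw [ProbabilityMeasure.toMeasure_map, hxseqm k, hxmdef]
      simp only
      rw [Measure.map_add _ _ (hf k).measurable, Measure.map_smul,
        Measure.map_smul, Measure.map_dirac' (hf k).measurable,
        Measure.map_dirac' (hf k).measurable, hp k]
      rfl
    have hedist : levyProkhorovEDist
        ((LevyProkhorov.toMeasureEquiv (α := ProbabilityMeasure X)
          (inducedMap (f k) (hf k) (xseq k))) : Measure X)
        ((LevyProkhorov.toMeasureEquiv (α := ProbabilityMeasure X) (xseq (k+1))) : Measure X)
        ≤ ((t (k+1) - t k : ℝ≥0) : ℝ≥0∞) := by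
      rw [hFm, hxseqm]
      exact mix_edist_le (htmono k) (ht1 (k+1)) _ _
    have hdle : dist (inducedMap (f k) (hf k) (xseq k)) (xseq (k + 1))
        ≤ ((t (k+1) - t k : ℝ≥0) : ℝ) := by
      calc dist (inducedMap (f k) (hf k) (xseq k)) (xseq (k + 1))
          = (levyProkhorovEDist
              ((LevyProkhorov.toMeasureEquiv (α := ProbabilityMeasure X)
                (inducedMap (f k) (hf k) (xseq k))) : Measure X)
              ((LevyProkhorov.toMeasureEquiv (α := ProbabilityMeasure X) (xseq (k+1))) : Measure X)).toReal :=
            rfl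
        _ ≤ (((t (k+1) - t k : ℝ≥0)) : ℝ≥0∞).toReal :=
            ENNReal.toReal_mono ENNReal.coe_ne_top hedist
        _ = ((t (k+1) - t k : ℝ≥0) : ℝ) := ENNReal.coe_toReal _
    refine lt_of_le_of_lt hdle ?_
    have hstep : t (k+1) - t k ≤ 1 / (n : ℝ≥0) :=
      tsub_le_iff_right.mpr ((htstep k).trans (le_of_eq (add_comm _ _)))
    calc ((t (k+1) - t k : ℝ≥0) : ℝ) ≤ ((1 / (n : ℝ≥0) : ℝ≥0) : ℝ) := by exact_mod_cast hstep
      _ = 1 / (n : ℝ) := by push_cast; ring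
      _ ≤ 1 / ((n₀ : ℝ) + 1) := by
          apply one_div_le_one_div_of_le
          · positivity
          · exact_mod_cast hn
      _ < δ := hn₀
  -- shadowing
  obtain ⟨z, hz⟩ := hshad xseq horb
  set zm : Measure X := ((LevyProkhorov.toMeasureEquiv (α := ProbabilityMeasure X) z) : Measure X) with hzmdef
  haveI : IsProbabilityMeasure zm := (LevyProkhorov.toMeasureEquiv (α := ProbabilityMeasure X) z).2
  -- time 0
  have hxm0 : xm 0 = Measure.dirac x := by
    rw [hxmdef]
    simp only [ht0, tsub_zero, one_smul, zero_smul, add_zero]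
    rfl
  have h0' : levyProkhorovEDist (Measure.dirac x) zm < ENNReal.ofReal ε := by
    rw [levyProkhorovEDist_comm]
    rw [ENNReal.lt_ofReal_iff_toReal_lt (levyProkhorovEDist_ne_top _ _)]
    have h0 : (levyProkhorovEDist zm (xm 0)).toReal < ε := hz 0
    rwa [hxm0] at h0
  have hball0 : 1 ≤ zm (Metric.ball x ε) + ENNReal.ofReal ε := close_to_dirac hεpos h0'
  -- time n
  have hxmn : xm n = Measure.dirac y := by
    rw [hxmdef]
    simp only [htn, tsub_self, zero_smul, one_smul, zero_add, hpn]
  have hmapz : ((LevyProkhorov.toMeasureEquiv (α := ProbabilityMeasure X)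
      (nacomp (fun m => inducedMap (f m) (hf m)) n z)) : Measure X)
      = Measure.map (nacomp f n) zm := nacomp_induced f hf z n
  haveI : IsProbabilityMeasure (Measure.map (nacomp f n) zm) :=
    Measure.isProbabilityMeasure_map (nacomp_cont f hf n).measurable.aemeasurable
  have hn' : levyProkhorovEDist (Measure.dirac y) (Measure.map (nacomp f n) zm)
      < ENNReal.ofReal ε := by
    rw [levyProkhorovEDist_comm]
    rw [ENNReal.lt_ofReal_iff_toReal_lt (levyProkhorovEDist_ne_top _ _)]
    have hzn : (levyProkhorovEDist
        ((LevyProkhorov.toMeasureEquiv (α := ProbabilityMeasure X)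
          (nacomp (fun m => inducedMap (f m) (hf m)) n z)) : Measure X) (xm n)).toReal < ε :=
      hz n
    rwa [hmapz, hxmn] at hzn
  have hballn : 1 ≤ (Measure.map (nacomp f n) zm) (Metric.ball y ε) + ENNReal.ofReal ε :=
    close_to_dirac hεpos hn'
  -- conclude
  have hTmble : MeasurableSet ((nacomp f n) ⁻¹' V) :=
    (nacomp_cont f hf n).measurable hVo.measurableSet
  have hmeasU : 1 ≤ zm U + ENNReal.ofReal ε := by
    exact hball0.trans (add_le_add_left
      (measure_mono ((ball_subset_ball hεltU.le).trans hbU)) _)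
  have hmeasT : 1 ≤ zm ((nacomp f n) ⁻¹' V) + ENNReal.ofReal ε := by
    refine hballn.trans (add_le_add_left ?_ _)
    calc (Measure.map (nacomp f n) zm) (Metric.ball y ε)
        ≤ (Measure.map (nacomp f n) zm) V :=
          measure_mono ((ball_subset_ball hεltV.le).trans hbV)
      _ = zm ((nacomp f n) ⁻¹' V) :=
          Measure.map_apply (nacomp_cont f hf n).measurable hVo.measurableSet
  have hne : (U ∩ (nacomp f n) ⁻¹' V).Nonempty := by
    by_contra hcon
    rw [Set.not_nonempty_iff_eq_empty] at hcon
    have hdisj : Disjoint U ((nacomp f n) ⁻¹' V) := Set.disjoint_iff_inter_eq_empty.mpr hcon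
    have hsum : zm U + zm ((nacomp f n) ⁻¹' V) ≤ 1 := by
      rw [← measure_union hdisj hTmble]
      exact prob_le_one
    have h2 : (1:ℝ≥0∞) + 1 ≤ 1 + (ENNReal.ofReal ε + ENNReal.ofReal ε) := by
      calc (1:ℝ≥0∞) + 1
          ≤ (zm U + ENNReal.ofReal ε) + (zm ((nacomp f n) ⁻¹' V) + ENNReal.ofReal ε) :=
            add_le_add hmeasU hmeasT
        _ = (zm U + zm ((nacomp f n) ⁻¹' V)) + (ENNReal.ofReal ε + ENNReal.ofReal ε) := by
            ring
        _ ≤ 1 + (ENNReal.ofReal ε + ENNReal.ofReal ε) := by gcongr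
    have h3 : (1:ℝ≥0∞) ≤ ENNReal.ofReal ε + ENNReal.ofReal ε := by
      rwa [ENNReal.add_le_add_iff_left ENNReal.one_ne_top] at h2
    have h4 : ENNReal.ofReal ε + ENNReal.ofReal ε < 1 := by
      rw [← ENNReal.ofReal_add hεpos.le hεpos.le, ← ENNReal.ofReal_one]
      exact (ENNReal.ofReal_lt_ofReal_iff one_pos).mpr hε2
    exact absurd h3 (not_le.mpr h4)
  obtain ⟨a, haU, haV⟩ := hne
  exact ⟨nacomp f n a, ⟨a, haU, rfl⟩, haV⟩
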